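/- Let a > 0, b > 0, C ≥ 0 and suppose |f(t, v + x*) − b·x*| ≤ C·|v| for all t and v. If a²/4 ≤ b < a²/2 − C, then the equilibrium x* of the controlled equation ẍ(t) + a·ẋ(t) + b·x(t) = f(t, x(g(t))) is globally asymptotically stable: every twice differentiable solution x satisfies x(t) → x* as t → ∞. -/

import Mathlib

open Filter MeasureTheory

section AuxDecay
open Set


lemma re_neg_mul {α : ℝ} (μ : ℂ) (hμ : μ.re = -α) (s : ℝ) :
    (-μ * (s:ℂ)).re = α * s := by
  simp [Complex.mul_re, hμ]

lemma decay_est {α : ℝ} (hα : 0 < α) (μ : ℂ) (hμ : μ.re = -α) (u F : ℝ → ℂ) (T t : ℝ)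
    (hT : T ≤ t) (hderiv : ∀ s ∈ Set.Icc T t, HasDerivAt u (μ * u s + F s) s)
    (K : ℝ) (hK : ∀ s ∈ Set.Icc T t, ‖F s‖ ≤ K) :
    ‖u t‖ ≤ Real.exp (-α * (t - T)) * ‖u T‖ + K / α := by
  have hK0 : 0 ≤ K := le_trans (norm_nonneg _) (hK T ⟨le_rfl, hT⟩)
  set U : ℝ → ℂ := fun s => Complex.exp (-μ * s) * u s with hU
  have hUd : ∀ s ∈ Set.Icc T t, HasDerivAt U (Complex.exp (-μ * s) * F s) s := by
    intro s hs
    have h1 : HasDerivAt (fun s : ℝ => Complex.exp (-μ * s)) (-μ * Complex.exp (-μ * s)) s := by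
      simpa [mul_comm, Function.comp_def] using (Complex.hasDerivAt_exp (-μ * s)).comp s
        ((hasDerivAt_id s).ofReal_comp.const_mul (-μ))
    have := h1.mul (hderiv s hs)
    convert this using 1
    · rfl
    · rfl
    · ring
  have hne : ∀ s : ℝ, ‖Complex.exp (-μ * s)‖ = Real.exp (α * s) := by
    intro s
    rw [Complex.norm_exp, re_neg_mul μ hμ]
  set B : ℝ → ℝ := fun s => K / α * (Real.exp (α * s) - Real.exp (α * T)) with hBdef
  have hBd : ∀ s : ℝ, HasDerivAt B (K / α * (Real.exp (α * s) * α)) s := by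
    intro s
    have h1 : HasDerivAt (fun y : ℝ => Real.exp (α * y)) (Real.exp (α * s) * α) s := by
      simpa [Function.comp_def] using (Real.hasDerivAt_exp (α * s)).comp s ((hasDerivAt_id s).const_mul α)
    exact (h1.sub_const _).const_mul _
  have key : ∀ s ∈ Set.Icc T t, ‖U s - U T‖ ≤ B s := by
    apply image_norm_le_of_norm_deriv_right_le_deriv_boundary
      (f := fun s => U s - U T) (f' := fun s => Complex.exp (-μ * s) * F s)
      (B := B) (B' := fun s => K / α * (Real.exp (α * s) * α))
    · intro s hs
      exact (((hUd s hs).sub_const _).continuousAt).continuousWithinAt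
    · intro s hs
      exact ((hUd s (Set.mem_Icc_of_Ico hs)).sub_const _).hasDerivWithinAt
    · simp [hBdef]
    · exact hBd
    · intro s hs
      rw [norm_mul, hne]
      have h7 : K / α * (Real.exp (α * s) * α) = Real.exp (α * s) * K := by
        field_simp
      rw [h7]
      exact mul_le_mul_of_nonneg_left (hK s (Set.mem_Icc_of_Ico hs)) (Real.exp_nonneg _)
  have hut : Complex.exp (μ * t) * U t = u t := by
    rw [hU]
    dsimp only
    rw [← mul_assoc, ← Complex.exp_add]
    have h8 : μ * (t:ℂ) + -μ * t = 0 := by ring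
    rw [h8, Complex.exp_zero, one_mul]
  have h2 : ‖U t‖ ≤ ‖U T‖ + B t := by
    have := key t ⟨hT, le_rfl⟩
    have h3 := norm_sub_norm_le (U t) (U T)
    linarith
  have hnm : ‖Complex.exp (μ * t)‖ = Real.exp (-α * t) := by
    rw [Complex.norm_exp]
    congr 1
    simp [Complex.mul_re, hμ]
  have hUT : ‖U T‖ = Real.exp (α * T) * ‖u T‖ := by
    show ‖Complex.exp (-μ * (T:ℂ)) * u T‖ = _
    rw [norm_mul, hne]
  have e1 : Real.exp (-α * t) * Real.exp (α * T) = Real.exp (-α * (t - T)) := by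
    rw [← Real.exp_add]; ring_nf
  have e2 : Real.exp (-α * t) * B t ≤ K / α := by
    show Real.exp (-α * t) * (K / α * (Real.exp (α * t) - Real.exp (α * T))) ≤ K / α
    have h4 : Real.exp (-α * t) * Real.exp (α * t) = 1 := by
      rw [← Real.exp_add]; simp
    have h5 : 0 ≤ K / α := div_nonneg hK0 hα.le
    have h6 : 0 < Real.exp (-α * t) * Real.exp (α * T) := by positivity
    nlinarith
  calc ‖u t‖ = Real.exp (-α * t) * ‖U t‖ := by rw [← hut, norm_mul, hnm]
    _ ≤ Real.exp (-α * t) * (‖U T‖ + B t) := mul_le_mul_of_nonneg_left h2 (Real.exp_nonneg _)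
    _ = Real.exp (-α * (t - T)) * ‖u T‖ + Real.exp (-α * t) * B t := by
        rw [hUT, ← e1]; ring
    _ ≤ Real.exp (-α * (t - T)) * ‖u T‖ + K / α := by linarith



lemma exp_decay_ev {α : ℝ} (hα : 0 < α) (c T : ℝ) {ε : ℝ} (hε : 0 < ε) :
    ∀ᶠ t in atTop, Real.exp (-α * (t - T)) * c ≤ ε := by
  have h0 : Tendsto (fun t : ℝ => α * (t - T)) atTop atTop := by
    apply Tendsto.const_mul_atTop hα
    exact tendsto_atTop_add_const_right atTop (-T) tendsto_id
  have h1 : Tendsto (fun t : ℝ => -α * (t - T)) atTop atBot := by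
    have := tendsto_neg_atTop_atBot.comp h0
    simpa [Function.comp_def, neg_mul] using this
  have h2 : Tendsto (fun t : ℝ => Real.exp (-α * (t - T)) * c) atTop (nhds 0) := by
    simpa using (Real.tendsto_exp_atBot.comp h1).mul_const c
  exact (h2.eventually_lt_const hε).mono fun t ht => ht.le

end AuxDecay

set_option maxHeartbeats 2000000

/-- Theorem 3, part b): if a²/4 ≤ b < a²/2 − C, the equilibrium x* of
ẍ(t) + a·ẋ(t) + b·x(t) = f(t, x(g(t))) is globally asymptotically stable. -/
theorem proportional_delayed_control_stability_case_b
    (t₀ a b C xs τ : ℝ)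
    (f : ℝ → ℝ → ℝ) (g : ℝ → ℝ)
    (hgmeas : Measurable g) (hgle : ∀ t, g t ≤ t) (hgtend : Tendsto g atTop atTop)
    (hτ : 0 < τ) (hdelay : ∀ t, t - g t ≤ τ)
    (ha : 0 < a) (hb : 0 < b) (hC : 0 ≤ C)
    (hfbound : ∀ t v, |f t (v + xs) - b * xs| ≤ C * |v|)
    (hcond : a ^ 2 / 4 ≤ b ∧ b < a ^ 2 / 2 - C)
    (x x' x'' : ℝ → ℝ)
    (hx' : ∀ t, HasDerivAt x (x' t) t) (hx'' : ∀ t, HasDerivAt x' (x'' t) t)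
    (hinit : ∃ M : ℝ, ∀ t ≤ t₀, |x t| ≤ M ∧ |x' t| ≤ M)
    (heq : ∀ t ≥ t₀, x'' t + a * x' t + b * x t = f t (x (g t))) :
    Tendsto x atTop (nhds xs) := by
  obtain ⟨hb1, hb2⟩ := hcond
  obtain ⟨α, hαdef⟩ : ∃ α : ℝ, α = a / 2 := ⟨_, rfl⟩
  have hα : 0 < α := by rw [hαdef]; positivity
  have hCα : C < α ^ 2 := by rw [hαdef]; nlinarith
  obtain ⟨q, hqdef⟩ : ∃ q : ℝ, q = C / α ^ 2 := ⟨_, rfl⟩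
  have hq0 : 0 ≤ q := by rw [hqdef]; positivity
  have hq1 : q < 1 := by rw [hqdef, div_lt_one (by positivity)]; exact hCα
  obtain ⟨ω, hωdef⟩ : ∃ ω : ℝ, ω = Real.sqrt (b - a ^ 2 / 4) := ⟨_, rfl⟩
  have hω2 : ω ^ 2 = b - a ^ 2 / 4 := by rw [hωdef]; exact Real.sq_sqrt (by linarith)
  obtain ⟨lam, hlamdef⟩ : ∃ lam : ℂ, lam = (-α : ℝ) + (ω : ℂ) * Complex.I := ⟨_, rfl⟩
  obtain ⟨lamc, hlamcdef⟩ : ∃ lamc : ℂ, lamc = (-α : ℝ) - (ω : ℂ) * Complex.I := ⟨_, rfl⟩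
  have hlamre : lam.re = -α := by rw [hlamdef]; simp
  have hlamcre : lamc.re = -α := by rw [hlamcdef]; simp
  have hsum : lam + lamc = -(a : ℂ) := by
    rw [hlamdef, hlamcdef, hαdef]
    push_cast
    ring
  have hmul : lam * lamc = (b : ℂ) := by
    rw [hlamdef, hlamcdef]
    have h1 : ((-α : ℝ) + (ω : ℂ) * Complex.I) * ((-α : ℝ) - (ω : ℂ) * Complex.I)
        = ((α ^ 2 + ω ^ 2 : ℝ) : ℂ) := by
      push_cast
      ring_nf
      rw [Complex.I_sq]
      ring
    rw [h1]
    norm_cast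
    rw [hω2, hαdef]
    ring
  obtain ⟨u, hudef⟩ : ∃ u : ℝ → ℂ, u = fun t => (x' t : ℂ) - lamc * ((x t : ℂ) - (xs : ℂ)) := ⟨_, rfl⟩
  obtain ⟨F, hFdef⟩ : ∃ F : ℝ → ℂ, F = fun t => ((f t (x (g t)) - b * xs : ℝ) : ℂ) := ⟨_, rfl⟩
  have hFb : ∀ t, ‖F t‖ ≤ C * |x (g t) - xs| := by
    intro t
    have h1 := hfbound t (x (g t) - xs)
    rw [sub_add_cancel] at h1
    calc ‖F t‖ = |f t (x (g t)) - b * xs| := by rw [hFdef]; exact Complex.norm_real _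
      _ ≤ C * |x (g t) - xs| := h1
  -- derivative of u
  have hueq : ∀ s, t₀ ≤ s → HasDerivAt u (lam * u s + F s) s := by
    intro s hs
    have h := ((hx'' s).ofReal_comp).sub ((((hx' s).ofReal_comp).sub_const (xs : ℂ)).const_mul lamc)
    have he : (x'' s : ℂ) - lamc * (x' s : ℂ) = lam * u s + F s := by
      have heqs := heq s hs
      have hx2 : (x'' s : ℝ) = f s (x (g s)) - a * x' s - b * x s := by linarith
      simp only [hudef, hFdef]
      push_cast [hx2]
      linear_combination (-(x' s : ℂ)) * hsum + ((x s : ℂ) - (xs : ℂ)) * hmul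
    rw [← he, hudef]
    exact h
  -- derivative of v
  have hveq : ∀ s : ℝ, HasDerivAt (fun t : ℝ => ((x t : ℂ) - (xs : ℂ)))
      (lamc * ((x s : ℂ) - (xs : ℂ)) + u s) s := by
    intro s
    have h := ((hx' s).ofReal_comp).sub_const (xs : ℂ)
    have he : ((x' s : ℂ)) = lamc * ((x s : ℂ) - (xs : ℂ)) + u s := by
      simp only [hudef]; ring
    rw [← he]
    exact h
  have hvnorm : ∀ s : ℝ, ‖((x s : ℂ) - (xs : ℂ))‖ = |x s - xs| := by
    intro s
    rw [show ((x s : ℂ) - (xs : ℂ)) = ((x s - xs : ℝ) : ℂ) by push_cast; ring]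
    exact Complex.norm_real _
  -- key estimates
  have hAu : ∀ T t : ℝ, t₀ ≤ T → T ≤ t → ∀ K : ℝ, (∀ s ∈ Set.Icc T t, ‖F s‖ ≤ K) →
      ‖u t‖ ≤ Real.exp (-α * (t - T)) * ‖u T‖ + K / α := by
    intro T t hT0 hT K hK
    exact decay_est hα lam hlamre u F T t hT
      (fun s hs => hueq s (hT0.trans hs.1)) K hK
  have hAv : ∀ T t : ℝ, T ≤ t → ∀ K : ℝ, (∀ s ∈ Set.Icc T t, ‖u s‖ ≤ K) →
      |x t - xs| ≤ Real.exp (-α * (t - T)) * |x T - xs| + K / α := by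
    intro T t hT K hK
    have := decay_est hα lamc hlamcre (fun t : ℝ => ((x t : ℂ) - (xs : ℂ))) u T t hT
      (fun s _ => hveq s) K hK
    rwa [hvnorm, hvnorm] at this
  have hexp1 : ∀ T t : ℝ, T ≤ t → Real.exp (-α * (t - T)) ≤ 1 := by
    intro T t hT
    calc Real.exp (-α * (t - T)) ≤ Real.exp 0 := Real.exp_le_exp.2 (by nlinarith)
      _ = 1 := Real.exp_zero
  -- boundedness
  obtain ⟨M, hM⟩ := hinit
  have hM0 : 0 ≤ M := le_trans (abs_nonneg _) (hM t₀ le_rfl).1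
  obtain ⟨M₀, hM₀def⟩ : ∃ M₀ : ℝ, M₀ = M + |xs| := ⟨_, rfl⟩
  have hM₀0 : 0 ≤ M₀ := by rw [hM₀def]; positivity
  have hMy : ∀ t, t ≤ t₀ → |x t - xs| ≤ M₀ := by
    intro t ht
    have h1 : |x t - xs| ≤ |x t| + |xs| := by
      rw [sub_eq_add_neg]
      exact (abs_add_le _ _).trans (by rw [abs_neg])
    have := (hM t ht).1
    rw [hM₀def]; linarith
  obtain ⟨K₁, hK₁def⟩ : ∃ K₁ : ℝ, K₁ = |x t₀ - xs| + ‖u t₀‖ / α := ⟨_, rfl⟩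
  have hK₁0 : 0 ≤ K₁ := by rw [hK₁def]; positivity
  obtain ⟨Bd, hBddef⟩ : ∃ Bd : ℝ, Bd = (M₀ + K₁) / (1 - q) := ⟨_, rfl⟩
  have hq1' : 0 < 1 - q := by linarith
  have hM₀B : M₀ ≤ Bd := by
    rw [hBddef, le_div_iff₀ hq1']
    nlinarith
  have hxc : Continuous x := continuous_iff_continuousAt.2 fun s => (hx' s).continuousAt
  have hbound : ∀ t, |x t - xs| ≤ Bd := by
    intro t
    rcases le_or_gt t t₀ with ht | ht
    · exact (hMy t ht).trans hM₀B
    · have hyc : ContinuousOn (fun s => |x s - xs|) (Set.Icc t₀ t) :=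
        ((hxc.sub continuous_const).abs).continuousOn
      obtain ⟨c, hcmem, hcmax⟩ :=
        isCompact_Icc.exists_isMaxOn (Set.nonempty_Icc.2 ht.le) hyc
      set D : ℝ := max M₀ |x c - xs| with hDdef
      have hD0 : 0 ≤ D := le_trans hM₀0 (le_max_left _ _)
      have hyD : ∀ s, s ≤ t → |x s - xs| ≤ D := by
        intro s hst
        rcases le_or_gt s t₀ with h1 | h1
        · exact (hMy s h1).trans (le_max_left _ _)
        · exact le_trans (hcmax ⟨h1.le, hst⟩) (le_max_right _ _)
      have hFD : ∀ s ∈ Set.Icc t₀ t, ‖F s‖ ≤ C * D := by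
        intro s hs
        exact (hFb s).trans (mul_le_mul_of_nonneg_left (hyD (g s) ((hgle s).trans hs.2)) hC)
      have huD : ∀ s ∈ Set.Icc t₀ t, ‖u s‖ ≤ ‖u t₀‖ + C * D / α := by
        intro s hs
        have h1 := hAu t₀ s le_rfl hs.1 (C * D) (fun r hr => hFD r ⟨hr.1, hr.2.trans hs.2⟩)
        have h2 := hexp1 t₀ s hs.1
        have h6 : Real.exp (-α * (s - t₀)) * ‖u t₀‖ ≤ ‖u t₀‖ :=
          mul_le_of_le_one_left (norm_nonneg _) h2
        linarith
      have hyc2 : |x c - xs| ≤ K₁ + q * D := by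
        have h1 := hAv t₀ c hcmem.1 (‖u t₀‖ + C * D / α)
          (fun r hr => huD r ⟨hr.1, hr.2.trans hcmem.2⟩)
        have h2 := hexp1 t₀ c hcmem.1
        have h3 : (‖u t₀‖ + C * D / α) / α = ‖u t₀‖ / α + q * D := by
          rw [hqdef]; field_simp
        have h4 := abs_nonneg (x t₀ - xs)
        have h6 : Real.exp (-α * (c - t₀)) * |x t₀ - xs| ≤ |x t₀ - xs| :=
          mul_le_of_le_one_left h4 h2
        rw [h3] at h1
        rw [hK₁def]
        linarith
      have hDB : D ≤ Bd := by
        rcases le_or_gt |x c - xs| M₀ with h1 | h1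
        · rw [hDdef, max_eq_left h1]; exact hM₀B
        · have h2 : D = |x c - xs| := max_eq_right h1.le
          rw [h2] at hyc2 ⊢
          rw [hBddef, le_div_iff₀ hq1']
          nlinarith [hM₀0, hyc2]
      exact (hyD t le_rfl).trans hDB
  -- one-step improvement
  have hstep : ∀ D : ℝ, (∀ᶠ t in atTop, |x t - xs| ≤ D) →
      ∀ ε > 0, ∀ᶠ t in atTop, |x t - xs| ≤ q * D + ε := by
    intro D hD ε hε
    have hD0 : 0 ≤ D := by
      obtain ⟨t, ht⟩ := hD.exists
      exact le_trans (abs_nonneg _) ht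
    obtain ⟨ε₁, hε₁def⟩ : ∃ ε₁ : ℝ, ε₁ = ε / (1 + 1 / α) := ⟨_, rfl⟩
    have hε₁0 : 0 < ε₁ := by rw [hε₁def]; positivity
    have hε₁sum : ε₁ + ε₁ / α = ε := by rw [hε₁def]; field_simp
    obtain ⟨T₁, hT₁⟩ := eventually_atTop.1 hD
    obtain ⟨T₂', hT₂'⟩ := eventually_atTop.1 (hgtend.eventually_ge_atTop T₁)
    set T₂ : ℝ := max T₂' t₀ with hT₂def
    have hFD : ∀ s, T₂ ≤ s → ‖F s‖ ≤ C * D := by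
      intro s hs
      exact (hFb s).trans (mul_le_mul_of_nonneg_left
        (hT₁ _ (hT₂' s (le_trans (le_max_left _ _) hs))) hC)
    have huev : ∀ t, T₂ ≤ t → ‖u t‖ ≤ Real.exp (-α * (t - T₂)) * ‖u T₂‖ + C * D / α :=
      fun t ht => hAu T₂ t (le_max_right _ _) ht (C * D) (fun s hs => hFD s hs.1)
    obtain ⟨T₃', hT₃'⟩ := eventually_atTop.1 (exp_decay_ev hα ‖u T₂‖ T₂ hε₁0)
    set T₃ : ℝ := max T₃' T₂ with hT₃def
    have huK : ∀ s, T₃ ≤ s → ‖u s‖ ≤ C * D / α + ε₁ := by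
      intro s hs
      have h1 := huev s (le_trans (le_max_right _ _) hs)
      have h2 := hT₃' s (le_trans (le_max_left _ _) hs)
      linarith
    have hyfin : ∀ t, T₃ ≤ t →
        |x t - xs| ≤ Real.exp (-α * (t - T₃)) * |x T₃ - xs| + (C * D / α + ε₁) / α :=
      fun t ht => hAv T₃ t ht (C * D / α + ε₁) (fun s hs => huK s hs.1)
    filter_upwards [exp_decay_ev hα |x T₃ - xs| T₃ hε₁0, eventually_ge_atTop T₃] with t h1 h2
    have h3 := hyfin t h2
    have h4 : (C * D / α + ε₁) / α = q * D + ε₁ / α := by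
      rw [hqdef]; field_simp
    linarith
  -- iteration
  have hiter : ∀ n : ℕ, ∀ ε : ℝ, 0 < ε → ∀ᶠ t in atTop, |x t - xs| ≤ q ^ n * Bd + ε := by
    intro n
    induction n with
    | zero =>
      intro ε hε
      filter_upwards with t
      have := hbound t
      simp only [pow_zero, one_mul]
      linarith
    | succ n ih =>
      intro ε hε
      have h1 := hstep (q ^ n * Bd + ε / 2) (ih (ε / 2) (by linarith)) (ε / 2) (by linarith)
      filter_upwards [h1] with t ht
      have h2 : q * (q ^ n * Bd + ε / 2) + ε / 2 ≤ q ^ (n + 1) * Bd + ε := by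
        have h3 : q * (ε / 2) ≤ ε / 2 := by nlinarith
        have h4 : q * (q ^ n * Bd) = q ^ (n + 1) * Bd := by ring
        linarith
      linarith
  -- conclusion
  have hBd0 : 0 ≤ Bd := le_trans hM₀0 hM₀B
  rw [Metric.tendsto_atTop]
  intro ε hε
  have hpow : Tendsto (fun n : ℕ => q ^ n * Bd) atTop (nhds 0) := by
    simpa using (tendsto_pow_atTop_nhds_zero_of_lt_one hq0 hq1).mul_const Bd
  obtain ⟨n, hn⟩ := (hpow.eventually_lt_const (show (0:ℝ) < ε / 2 by linarith)).exists
  obtain ⟨N, hN⟩ := eventually_atTop.1 (hiter n (ε / 4) (by linarith))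
  refine ⟨N, fun t ht => ?_⟩
  have := hN t ht
  rw [Real.dist_eq]
  linarith
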